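/- Let D be an invertible multiplication operator on L^p(X,μ), 1 ≤ p < ∞ (i.e., D and D⁻¹ are both multiplication by L^∞ functions), and let A be a bounded operator on L^p(X,μ). Then ‖A‖² ≤ ‖DA‖·‖D⁻¹A‖. -/

import Mathlib

open MeasureTheory ENNReal

/-- If `D` is an invertible multiplication operator on `L^p(X, μ)`, `1 ≤ p < ∞`
(multiplication by an `L^∞` function bounded away from zero, with inverse `Dinv`
the multiplication by the reciprocal function), then `‖A‖² ≤ ‖DA‖ ‖D⁻¹A‖`. -/
lemma key_norm_sq_le {X : Type*} [MeasurableSpace X] (μ : Measure X)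
    (p : ℝ≥0∞) [Fact (1 ≤ p)] (hp : p ≠ ∞)
    (D Dinv : Lp ℂ p μ →L[ℂ] Lp ℂ p μ) (d : X → ℂ)
    (hbelow : ∃ ε > (0 : ℝ), ∀ᵐ x ∂μ, ε ≤ ‖d x‖)
    (hD : ∀ f : Lp ℂ p μ, (D f : X → ℂ) =ᵐ[μ] fun x => d x * f x)
    (hDinv : ∀ f : Lp ℂ p μ, (Dinv f : X → ℂ) =ᵐ[μ] fun x => (d x)⁻¹ * f x)
    (g : Lp ℂ p μ) : ‖g‖ ^ 2 ≤ ‖D g‖ * ‖Dinv g‖ := by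
  obtain ⟨ε, hε, hae⟩ := hbelow
  have hp0 : p ≠ 0 := (lt_of_lt_of_le zero_lt_one (Fact.out : 1 ≤ p)).ne'
  set F1 : X → ℝ := fun x => Real.sqrt ‖(D g : X → ℂ) x‖ with hF1
  set F2 : X → ℝ := fun x => Real.sqrt ‖(Dinv g : X → ℂ) x‖ with hF2
  have hF1' : F1 = fun x => ‖(D g : X → ℂ) x‖ ^ (1/2 : ℝ) := by
    funext x; exact Real.sqrt_eq_rpow _
  have hF2' : F2 = fun x => ‖(Dinv g : X → ℂ) x‖ ^ (1/2 : ℝ) := by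
    funext x; exact Real.sqrt_eq_rpow _
  have hm1 : AEStronglyMeasurable F1 μ :=
    Real.continuous_sqrt.comp_aestronglyMeasurable (Lp.aestronglyMeasurable (D g)).norm
  have hm2 : AEStronglyMeasurable F2 μ :=
    Real.continuous_sqrt.comp_aestronglyMeasurable (Lp.aestronglyMeasurable (Dinv g)).norm
  have hpqr : 1 / p = 1 / (2 * p) + 1 / (2 * p) := by
    rw [ENNReal.div_add_div_same, one_add_one_eq_two,
      show (2 : ℝ≥0∞) / (2 * p) = 2 * 1 / (2 * p) by rw [mul_one],
      ENNReal.mul_div_mul_left _ _ two_ne_zero ENNReal.ofNat_ne_top]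
  have hH : eLpNorm (fun x => F1 x * F2 x) p μ ≤ eLpNorm F1 (2*p) μ * eLpNorm F2 (2*p) μ := by
    haveI : ENNReal.HolderTriple (2*p) (2*p) p := ⟨by simpa only [one_div] using hpqr.symm⟩
    simpa using eLpNorm_le_eLpNorm_mul_eLpNorm'_of_norm hm1 hm2 (· * ·) 1
      (Filter.Eventually.of_forall fun x => by simpa using (norm_mul_le (F1 x) (F2 x)))
  have h2p : 2 * p * ENNReal.ofReal (1/2 : ℝ) = p := by
    rw [show ENNReal.ofReal (1/2 : ℝ) = 2⁻¹ by
      rw [one_div, ENNReal.ofReal_inv_of_pos two_pos]; norm_num]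
    rw [mul_comm 2 p, mul_assoc, ENNReal.mul_inv_cancel two_ne_zero ENNReal.ofNat_ne_top, mul_one]
  have hE1 : eLpNorm F1 (2*p) μ = eLpNorm (D g : X → ℂ) p μ ^ (1/2 : ℝ) := by
    rw [hF1', eLpNorm_norm_rpow _ (by norm_num : (0:ℝ) < 1/2), h2p]
  have hE2 : eLpNorm F2 (2*p) μ = eLpNorm (Dinv g : X → ℂ) p μ ^ (1/2 : ℝ) := by
    rw [hF2', eLpNorm_norm_rpow _ (by norm_num : (0:ℝ) < 1/2), h2p]
  have heq : (fun x => F1 x * F2 x) =ᵐ[μ] fun x => ‖(g : X → ℂ) x‖ := by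
    filter_upwards [hD g, hDinv g, hae] with x h1 h2 h3
    have hdn : (0:ℝ) < ‖d x‖ := lt_of_lt_of_le hε h3
    simp only [hF1, hF2, h1, h2, norm_mul, norm_inv]
    rw [← Real.sqrt_mul (by positivity),
      show ‖d x‖ * ‖(g : X → ℂ) x‖ * (‖d x‖⁻¹ * ‖(g : X → ℂ) x‖)
        = ‖(g : X → ℂ) x‖ * ‖(g : X → ℂ) x‖ by
          have hne : ‖d x‖ ≠ 0 := hdn.ne'
          field_simp,
      Real.sqrt_mul_self (norm_nonneg _)]
  have hmain : eLpNorm (g : X → ℂ) p μ ≤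
      eLpNorm (D g : X → ℂ) p μ ^ (1/2 : ℝ) * eLpNorm (Dinv g : X → ℂ) p μ ^ (1/2 : ℝ) := by
    calc eLpNorm (g : X → ℂ) p μ = eLpNorm (fun x => ‖(g : X → ℂ) x‖) p μ :=
          (eLpNorm_norm _).symm
      _ = eLpNorm (fun x => F1 x * F2 x) p μ := (eLpNorm_congr_ae heq).symm
      _ ≤ _ := hE1 ▸ hE2 ▸ hH
  have hfin1 : eLpNorm (D g : X → ℂ) p μ ≠ ∞ := (Lp.eLpNorm_lt_top _).ne
  have hfin2 : eLpNorm (Dinv g : X → ℂ) p μ ≠ ∞ := (Lp.eLpNorm_lt_top _).ne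
  have hfin : eLpNorm (D g : X → ℂ) p μ ^ (1/2 : ℝ) * eLpNorm (Dinv g : X → ℂ) p μ ^ (1/2 : ℝ)
      ≠ ∞ :=
    ENNReal.mul_ne_top (ENNReal.rpow_ne_top_of_nonneg (by norm_num) hfin1)
      (ENNReal.rpow_ne_top_of_nonneg (by norm_num) hfin2)
  have hreal : ‖g‖ ≤ ‖D g‖ ^ (1/2 : ℝ) * ‖Dinv g‖ ^ (1/2 : ℝ) := by
    rw [Lp.norm_def, Lp.norm_def, Lp.norm_def, ENNReal.toReal_rpow, ENNReal.toReal_rpow,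
      ← ENNReal.toReal_mul]
    exact ENNReal.toReal_mono hfin hmain
  have e1 : (‖D g‖ ^ (1/2 : ℝ)) ^ 2 = ‖D g‖ := by
    rw [← Real.rpow_natCast (‖D g‖ ^ (1/2 : ℝ)) 2, ← Real.rpow_mul (norm_nonneg _)]
    norm_num
  have e2 : (‖Dinv g‖ ^ (1/2 : ℝ)) ^ 2 = ‖Dinv g‖ := by
    rw [← Real.rpow_natCast (‖Dinv g‖ ^ (1/2 : ℝ)) 2, ← Real.rpow_mul (norm_nonneg _)]
    norm_num
  calc ‖g‖ ^ 2 ≤ (‖D g‖ ^ (1/2 : ℝ) * ‖Dinv g‖ ^ (1/2 : ℝ)) ^ 2 :=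
        pow_le_pow_left₀ (norm_nonneg g) hreal 2
    _ = ‖D g‖ * ‖Dinv g‖ := by rw [mul_pow, e1, e2]

theorem sq_norm_le_norm_mul_left
    {X : Type*} [MeasurableSpace X] (μ : Measure X) [SigmaFinite μ]
    (p : ℝ≥0∞) [Fact (1 ≤ p)] (hp : p ≠ ∞)
    (D Dinv : Lp ℂ p μ →L[ℂ] Lp ℂ p μ) (d : X → ℂ)
    (hbdd : ∃ C, ∀ᵐ x ∂μ, ‖d x‖ ≤ C)
    (hbelow : ∃ ε > (0 : ℝ), ∀ᵐ x ∂μ, ε ≤ ‖d x‖)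
    (hD : ∀ f : Lp ℂ p μ, (D f : X → ℂ) =ᵐ[μ] fun x => d x * f x)
    (hDinv : ∀ f : Lp ℂ p μ, (Dinv f : X → ℂ) =ᵐ[μ] fun x => (d x)⁻¹ * f x)
    (A : Lp ℂ p μ →L[ℂ] Lp ℂ p μ) :
    ‖A‖ ^ 2 ≤ ‖D.comp A‖ * ‖Dinv.comp A‖ := by
  have hC : 0 ≤ ‖D.comp A‖ * ‖Dinv.comp A‖ := by positivity
  have hA : ‖A‖ ≤ Real.sqrt (‖D.comp A‖ * ‖Dinv.comp A‖) := by
    refine A.opNorm_le_bound (Real.sqrt_nonneg _) fun f => ?_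
    have key := key_norm_sq_le μ p hp D Dinv d hbelow hD hDinv (A f)
    have h1 : ‖D (A f)‖ ≤ ‖D.comp A‖ * ‖f‖ := (D.comp A).le_opNorm f
    have h2 : ‖Dinv (A f)‖ ≤ ‖Dinv.comp A‖ * ‖f‖ := (Dinv.comp A).le_opNorm f
    have hsq : ‖A f‖ ^ 2 ≤ (‖D.comp A‖ * ‖Dinv.comp A‖) * ‖f‖ ^ 2 := by
      nlinarith [norm_nonneg (D (A f)), norm_nonneg (Dinv (A f)), norm_nonneg f,
        norm_nonneg (A f), norm_nonneg (D.comp A), norm_nonneg (Dinv.comp A)]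
    have := Real.sqrt_le_sqrt hsq
    rwa [Real.sqrt_sq (norm_nonneg _), Real.sqrt_mul hC, Real.sqrt_sq (norm_nonneg f)] at this
  calc ‖A‖ ^ 2 ≤ Real.sqrt (‖D.comp A‖ * ‖Dinv.comp A‖) ^ 2 :=
        pow_le_pow_left₀ (norm_nonneg A) hA 2
    _ = ‖D.comp A‖ * ‖Dinv.comp A‖ := Real.sq_sqrt hC
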